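/- Let n ≥ 1 and let v₁, …, vₙ : ℝ → ℝ be continuous functions with vᵢ(0) = 0 for all i. The subgroup of the permutation group of ℝ × ℝ generated by all left translations λ_a of ∗ (over all a ∈ ℝ × ℝ) equals the group Mₙ if and only if vₙ is non-linear, i.e. there is no constant c ∈ ℝ with vₙ(u) = c·u for all u ∈ ℝ. -/

import Mathlib

open Polynomial

noncomputable def Eperm (c : ℝ) (f : ℝ → ℝ) : Equiv.Perm (ℝ × ℝ) where
  toFun p := (p.1 + c, p.2 + f p.1)
  invFun p := (p.1 - c, p.2 - f (p.1 - c))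
  left_inv p := by simp
  right_inv p := by simp

lemma Eperm_apply (c : ℝ) (f : ℝ → ℝ) (x y : ℝ) :
    Eperm c f (x, y) = (x + c, y + f x) := rfl

lemma Eperm_ext {F : Equiv.Perm (ℝ × ℝ)} {c : ℝ} {f : ℝ → ℝ}
    (h : ∀ x y, F (x, y) = (x + c, y + f x)) : F = Eperm c f := by
  apply Equiv.ext; rintro ⟨x, y⟩; rw [h]; rfl

lemma Eperm_congr {c d : ℝ} {f g : ℝ → ℝ} (h1 : c = d) (h2 : ∀ x, f x = g x) :
    Eperm c f = Eperm d g := by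
  subst h1; congr 1; exact funext h2

lemma Eperm_mul (c d : ℝ) (f g : ℝ → ℝ) :
    Eperm c f * Eperm d g = Eperm (c + d) (fun x => g x + f (x + d)) := by
  apply Equiv.ext; rintro ⟨x, y⟩
  simp [Eperm, Equiv.Perm.mul_apply, Prod.ext_iff]
  constructor <;> ring

lemma Eperm_inv (c : ℝ) (f : ℝ → ℝ) :
    (Eperm c f)⁻¹ = Eperm (-c) (fun x => -f (x - c)) := by
  apply Equiv.ext; rintro ⟨x, y⟩
  show (Eperm c f).symm (x, y) = _
  simp [Eperm, Prod.ext_iff]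
  constructor <;> ring

lemma Eperm_zero : Eperm 0 (fun _ => (0:ℝ)) = 1 := by
  apply Equiv.ext; rintro ⟨x, y⟩; simp [Eperm]

lemma hasseDeriv_eq_C {p : ℝ[X]} {m : ℕ} (h : p.natDegree ≤ m) :
    hasseDeriv m p = C (p.coeff m) := by
  ext k
  rw [hasseDeriv_coeff]
  rcases Nat.eq_zero_or_pos k with hk | hk
  · subst hk; simp
  · rw [coeff_eq_zero_of_natDegree_lt (by omega), coeff_C, if_neg (by omega)]
    ring

lemma coeff_comp_linear {p : ℝ[X]} {m : ℕ} (h : p.natDegree ≤ m) (a : ℝ) :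
    (p.comp (X + C a)).coeff m = p.coeff m := by
  rw [← taylor_apply, taylor_coeff, hasseDeriv_eq_C h, eval_C]

lemma hasseDeriv_eq_linear {p : ℝ[X]} {k : ℕ} (h : p.natDegree ≤ k + 1) :
    hasseDeriv k p = C (p.coeff k) + C ((k+1 : ℝ) * p.coeff (k+1)) * X := by
  ext j
  rw [hasseDeriv_coeff]
  match j with
  | 0 => simp
  | 1 =>
    rw [Nat.add_comm 1 k, Nat.choose_succ_self_right]
    simp [coeff_C]
  | (j+2) =>
    rw [coeff_eq_zero_of_natDegree_lt (show p.natDegree < j + 2 + k by omega)]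
    simp [coeff_C, coeff_X, coeff_one]

lemma coeff_comp_linear_pred {p : ℝ[X]} {k : ℕ} (h : p.natDegree ≤ k + 1) (a : ℝ) :
    (p.comp (X + C a)).coeff k = p.coeff k + (k+1 : ℝ) * p.coeff (k+1) * a := by
  rw [← taylor_apply, taylor_coeff, hasseDeriv_eq_linear h]
  simp

lemma natDegree_comp_linear_le {p : ℝ[X]} {m : ℕ} (h : p.natDegree ≤ m) (a : ℝ) :
    (p.comp (X + C a)).natDegree ≤ m := by
  refine le_trans natDegree_comp_le ?_
  simpa [natDegree_X_add_C] using h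

lemma eval_comp_linear (p : ℝ[X]) (a x : ℝ) :
    (p.comp (X + C a)).eval x = p.eval (x + a) := by
  simp [eval_comp]

lemma natDegree_le_of_coeff_zero {p : ℝ[X]} {k : ℕ} (h : p.natDegree ≤ k + 1)
    (h2 : p.coeff (k+1) = 0) : p.natDegree ≤ k := by
  rw [natDegree_le_iff_coeff_eq_zero] at h ⊢
  intro m hm
  rcases eq_or_lt_of_le (Nat.succ_le_of_lt hm) with h' | h'
  · rw [← h']; exact h2
  · exact h m h'

theorem stmt14
    (n : ℕ) (hn : 1 ≤ n)
    (v : Fin n → ℝ → ℝ) (hv0 : ∀ i, v i 0 = 0) (hvc : ∀ i, Continuous (v i))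
    (mul : ℝ × ℝ → ℝ × ℝ → ℝ × ℝ)
    (hmul : ∀ a b : ℝ × ℝ, mul a b =
      (a.1 + b.1,
        a.2 + b.2 + ∑ i : Fin n, (-1 : ℝ) ^ ((i : ℕ) + 1) * b.1 ^ ((i : ℕ) + 1) * v i a.1)) :
    ((Subgroup.closure
        {f : Equiv.Perm (ℝ × ℝ) | ∃ a : ℝ × ℝ, ∀ x, f x = mul a x} :
        Subgroup (Equiv.Perm (ℝ × ℝ))) : Set (Equiv.Perm (ℝ × ℝ))) =
      {f : Equiv.Perm (ℝ × ℝ) | ∃ c : ℝ, ∃ p : Polynomial ℝ, p.natDegree ≤ n ∧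
        ∀ x y : ℝ, f (x, y) = (x + c, y + p.eval x)} ↔
      ¬∃ c : ℝ, ∀ u : ℝ, v ⟨n - 1, by omega⟩ u = c * u := by
  set G := Subgroup.closure
      {f : Equiv.Perm (ℝ × ℝ) | ∃ a : ℝ × ℝ, ∀ x, f x = mul a x} with hGdef
  set vn : ℝ → ℝ := v ⟨n - 1, by omega⟩ with hvn
  -- the generator polynomial
  set qp : ℝ → ℝ[X] :=
    fun u => ∑ i : Fin n, C ((-1:ℝ)^((i:ℕ)+1) * v i u) * X^((i:ℕ)+1) with hqp
  have qp_eval : ∀ u x : ℝ, (qp u).eval x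
      = ∑ i : Fin n, (-1:ℝ)^((i:ℕ)+1) * x^((i:ℕ)+1) * v i u := by
    intro u x
    rw [hqp, eval_finset_sum]
    apply Finset.sum_congr rfl
    intro i _
    simp; ring
  have qp_deg : ∀ u, (qp u).natDegree ≤ n := by
    intro u
    apply Polynomial.natDegree_sum_le_of_forall_le
    intro i _
    exact le_trans (natDegree_C_mul_le _ _) (by simp [i.2, Nat.succ_le_of_lt i.2])
  have qp_coeff : ∀ u, (qp u).coeff n = (-1:ℝ)^n * vn u := by
    intro u
    rw [hqp, finset_sum_coeff]
    have key : ∀ i : Fin n, (C ((-1:ℝ)^((i:ℕ)+1) * v i u) * X^((i:ℕ)+1)).coeff n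
        = if i = (⟨n-1, by omega⟩ : Fin n) then (-1:ℝ)^n * v i u else 0 := by
      intro i
      rw [coeff_C_mul, coeff_X_pow]
      rcases eq_or_ne i (⟨n-1, by omega⟩ : Fin n) with h | h
      · subst h
        rw [if_pos (by simp only [Fin.val_mk]; omega), if_pos rfl]
        simp only [Fin.val_mk, mul_one]
        rw [show n - 1 + 1 = n from by omega]
      · rw [if_neg ?_, if_neg h, mul_zero]
        have : (i : ℕ) ≠ n - 1 := fun hc => h (Fin.ext hc)
        omega
    rw [Finset.sum_congr rfl (fun i _ => key i), Finset.sum_ite_eq' Finset.univ]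
    simp [hvn]
  have gen_mem : ∀ u z : ℝ, Eperm u (fun x => z + (qp u).eval x) ∈ G := by
    intro u z
    apply Subgroup.subset_closure
    refine ⟨(u, z), ?_⟩
    rintro ⟨x, y⟩
    rw [hmul, Eperm_apply, qp_eval]
    simp [Prod.ext_iff]
    constructor <;> ring
  constructor
  · -- closure = M implies vₙ nonlinear
    intro hEq
    rintro ⟨c0, hc0⟩
    -- the subgroup K cut out by the linear coefficient relation
    set K : Subgroup (Equiv.Perm (ℝ × ℝ)) :=
      { carrier := {f | ∃ c : ℝ, ∃ p : ℝ[X], p.natDegree ≤ n ∧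
          (∀ x y : ℝ, f (x, y) = (x + c, y + p.eval x)) ∧
          p.coeff n = (-1:ℝ)^n * c0 * c},
        one_mem' := ⟨0, 0, by simp, by intro x y; simp, by simp⟩,
        mul_mem' := by
          rintro f g ⟨c, p, hp, hf, hpc⟩ ⟨d, q, hq, hg, hqc⟩
          refine ⟨c + d, q + p.comp (X + C d), ?_, ?_, ?_⟩
          · exact le_trans (natDegree_add_le _ _)
              (max_le hq (natDegree_comp_linear_le hp d))
          · intro x y
            rw [Equiv.Perm.mul_apply, hg, hf]
            simp [eval_comp_linear, Prod.ext_iff]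
            constructor <;> ring
          · rw [coeff_add, coeff_comp_linear hp, hpc, hqc]; ring
        inv_mem' := by
          rintro f ⟨c, p, hp, hf, hpc⟩
          refine ⟨-c, -(p.comp (X + C (-c))), ?_, ?_, ?_⟩
          · rw [natDegree_neg]; exact natDegree_comp_linear_le hp _
          · have hEf : f = Eperm c p.eval := Eperm_ext hf
            intro x y
            rw [hEf, Eperm_inv, Eperm_apply]
            simp [eval_comp_linear, Prod.ext_iff]
            constructor <;> ring_nf
          · rw [coeff_neg, coeff_comp_linear hp, hpc]; ring } with hK
    have hGK : (G : Set (Equiv.Perm (ℝ × ℝ))) ⊆ K := by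
      rw [hGdef]
      apply Subgroup.closure_le K |>.2
      rintro f ⟨a, ha⟩
      refine ⟨a.1, C a.2 + qp a.1, ?_, ?_, ?_⟩
      · exact le_trans (natDegree_add_le _ _) (max_le (le_trans (natDegree_C _).le (by omega)) (qp_deg a.1))
      · intro x y
        rw [ha (x, y), hmul, ← qp_eval]
        simp [Prod.ext_iff]
        constructor <;> ring
      · rw [coeff_add, coeff_C, if_neg (by omega), qp_coeff, hc0]
        ring
    -- the shear by X^n is in M but violates K
    have hX : Eperm 0 (fun x => (X^n : ℝ[X]).eval x) ∈ {f : Equiv.Perm (ℝ × ℝ) |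
        ∃ c : ℝ, ∃ p : Polynomial ℝ, p.natDegree ≤ n ∧
        ∀ x y : ℝ, f (x, y) = (x + c, y + p.eval x)} := by
      exact ⟨0, X^n, by simp, fun x y => by rw [Eperm_apply]⟩
    rw [← hEq] at hX
    obtain ⟨c, p, hpdeg, hform, hcoeff⟩ := hGK hX
    have h00 := hform 0 0
    rw [Eperm_apply] at h00
    simp [zero_pow (by omega : n ≠ 0), Prod.ext_iff] at h00
    obtain ⟨hc, hp0⟩ := h00
    have hpeval : ∀ x : ℝ, p.eval x = x^n := by
      intro x
      have := hform x 0
      rw [Eperm_apply] at this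
      simp [← hc, Prod.ext_iff] at this
      linarith [this]
    have hpX : p = X^n := by
      apply Polynomial.funext
      intro x
      simp [hpeval x]
    rw [hpX] at hcoeff
    simp [← hc] at hcoeff
  · intro hnl
    have hWadd : ∀ p q : ℝ[X], Eperm 0 (fun x => p.eval x) ∈ G →
        Eperm 0 (fun x => q.eval x) ∈ G → Eperm 0 (fun x => (p+q).eval x) ∈ G := by
      intro p q hp hq
      have heq : Eperm 0 (fun x => (p+q).eval x)
          = Eperm 0 (fun x => p.eval x) * Eperm 0 (fun x => q.eval x) := by
        rw [Eperm_mul]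
        exact Eperm_congr (by ring) (fun x => by simp; ring)
      rw [heq]; exact mul_mem hp hq
    have hWneg : ∀ p : ℝ[X], Eperm 0 (fun x => p.eval x) ∈ G →
        Eperm 0 (fun x => (-p).eval x) ∈ G := by
      intro p hp
      have heq : Eperm 0 (fun x => (-p).eval x) = (Eperm 0 (fun x => p.eval x))⁻¹ := by
        rw [Eperm_inv]
        exact Eperm_congr (by ring) (fun x => by simp)
      rw [heq]; exact inv_mem hp
    have hWsub : ∀ p q : ℝ[X], Eperm 0 (fun x => p.eval x) ∈ G →
        Eperm 0 (fun x => q.eval x) ∈ G → Eperm 0 (fun x => (p-q).eval x) ∈ G := by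
      intro p q hp hq
      have : p - q = p + (-q) := by ring
      rw [this]
      exact hWadd _ _ hp (hWneg _ hq)
    have hWC : ∀ z : ℝ, Eperm 0 (fun x => (C z : ℝ[X]).eval x) ∈ G := by
      intro z
      have heq : Eperm 0 (fun x => (C z : ℝ[X]).eval x)
          = Eperm 0 (fun x => z + (qp 0).eval x) :=
        Eperm_congr rfl (fun x => by rw [qp_eval]; simp [hv0])
      rw [heq]; exact gen_mem 0 z
    have hWshift : ∀ p : ℝ[X], Eperm 0 (fun x => p.eval x) ∈ G → ∀ a : ℝ,
        Eperm 0 (fun x => (p.comp (X + C a)).eval x) ∈ G := by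
      intro p hp a
      have heq : Eperm 0 (fun x => (p.comp (X + C a)).eval x)
          = (Eperm a (fun x => 0 + (qp a).eval x))⁻¹ *
            (Eperm 0 (fun x => p.eval x) * Eperm a (fun x => 0 + (qp a).eval x)) := by
        rw [Eperm_mul, Eperm_inv, Eperm_mul]
        refine Eperm_congr (by ring) (fun x => ?_)
        rw [eval_comp_linear, show x + (0 + a) - a = x by ring]
        ring
      rw [heq]
      exact mul_mem (inv_mem (gen_mem a 0)) (mul_mem hp (gen_mem a 0))
    have hWD : ∀ u u' : ℝ,
        Eperm 0 (fun x => ((qp u).comp (X + C (-u)) + (qp u').comp (X + C (-(u+u')))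
          - (qp (u+u')).comp (X + C (-(u+u')))).eval x) ∈ G := by
      intro u u'
      have heq : Eperm 0 (fun x => ((qp u).comp (X + C (-u)) + (qp u').comp (X + C (-(u+u')))
          - (qp (u+u')).comp (X + C (-(u+u')))).eval x)
          = Eperm u (fun x => 0 + (qp u).eval x) * Eperm u' (fun x => 0 + (qp u').eval x)
            * (Eperm (u+u') (fun x => 0 + (qp (u+u')).eval x))⁻¹ := by
        rw [Eperm_mul, Eperm_inv, Eperm_mul]
        refine Eperm_congr (by ring) (fun x => ?_)
        simp only [eval_add, eval_sub, eval_comp_linear]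
        rw [show x - (u + u') = x + -(u+u') by ring,
          show x + -(u + u') + u' = x + -u by ring]
        ring
      rw [heq]
      exact mul_mem (mul_mem (gen_mem u 0) (gen_mem u' 0)) (inv_mem (gen_mem (u+u') 0))
    have hexist : ∃ u0 u1 : ℝ, vn u0 + vn u1 - vn (u0 + u1) ≠ 0 := by
      by_contra hcon
      push_neg at hcon
      apply hnl
      refine ⟨vn 1, fun u => ?_⟩
      have hadd : ∀ a b : ℝ, vn (a + b) = vn a + vn b := by
        intro a b
        have := hcon a b
        linarith [this]
      set φ : ℝ →+ ℝ := AddMonoidHom.mk' vn hadd with hφ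
      have hcont : Continuous (⇑φ) := hvc _
      set L := φ.toRealLinearMap hcont with hLdef
      have hL : ∀ x : ℝ, L x = vn x := fun x =>
        congrFun (AddMonoidHom.coe_toRealLinearMap φ hcont) x
      show vn u = vn 1 * u
      calc vn u = L u := (hL u).symm
        _ = L (u • (1:ℝ)) := by rw [smul_eq_mul, mul_one]
        _ = u • L 1 := by rw [map_smul]
        _ = vn 1 * u := by rw [hL 1, smul_eq_mul]; ring
    have hSurjn : ∀ t : ℝ, ∃ p : ℝ[X], Eperm 0 (fun x => p.eval x) ∈ G ∧
        p.natDegree ≤ n ∧ p.coeff n = t := by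
      obtain ⟨u0, u1, hd0⟩ := hexist
      set T : AddSubgroup ℝ :=
        { carrier := {t | ∃ p : ℝ[X], Eperm 0 (fun x => p.eval x) ∈ G ∧
            p.natDegree ≤ n ∧ p.coeff n = t},
          zero_mem' := ⟨0, by
            have : Eperm 0 (fun x => (0:ℝ[X]).eval x) = 1 := by
              rw [show (fun x => (0:ℝ[X]).eval x) = (fun _ : ℝ => (0:ℝ)) from by funext x; simp]
              exact Eperm_zero
            rw [this]; exact one_mem G, by simp, by simp⟩,
          add_mem' := by
            rintro a b ⟨p, hp, hdp, hcp⟩ ⟨q, hq, hdq, hcq⟩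
            exact ⟨p + q, hWadd _ _ hp hq,
              le_trans (natDegree_add_le _ _) (max_le hdp hdq),
              by rw [coeff_add, hcp, hcq]⟩,
          neg_mem' := by
            rintro a ⟨p, hp, hdp, hcp⟩
            exact ⟨-p, hWneg _ hp, by rwa [natDegree_neg], by rw [coeff_neg, hcp]⟩ } with hT
      set s : ℝ → ℝ := fun u => (-1:ℝ)^n * (vn u + vn u1 - vn (u + u1)) with hs
      have hsT : ∀ u : ℝ, s u ∈ T := by
        intro u
        refine ⟨(qp u).comp (X + C (-u)) + (qp u1).comp (X + C (-(u+u1)))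
          - (qp (u+u1)).comp (X + C (-(u+u1))), hWD u u1, ?_, ?_⟩
        · refine le_trans (natDegree_sub_le _ _) (max_le (le_trans (natDegree_add_le _ _)
            (max_le ?_ ?_)) ?_) <;> exact natDegree_comp_linear_le (qp_deg _) _
        · rw [coeff_sub, coeff_add, coeff_comp_linear (qp_deg _),
            coeff_comp_linear (qp_deg _), coeff_comp_linear (qp_deg _),
            qp_coeff, qp_coeff, qp_coeff]
          rw [hs]; ring
      have hscont : Continuous s := by
        apply Continuous.mul continuous_const
        exact ((hvc _).add continuous_const).sub ((hvc _).comp (continuous_id.add continuous_const))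
      have hs0 : s 0 = 0 := by
        rw [hs]
        have : vn 0 = 0 := hv0 _
        simp [this]
      have hsu0 : s u0 ≠ 0 := by
        rw [hs]
        intro hcon
        rcases mul_eq_zero.mp hcon with h | h
        · exact absurd h (by positivity)
        · exact hd0 h
      have hIcc : ∀ t ∈ Set.uIcc (0:ℝ) (s u0), t ∈ T := by
        intro t ht
        have h2 := intermediate_value_uIcc (a := (0:ℝ)) (b := u0) (f := s)
          hscont.continuousOn
        rw [hs0] at h2
        obtain ⟨u, _, hu⟩ := h2 ht
        rw [← hu]; exact hsT u
      set d : ℝ := s u0 with hdd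
      have habs : ∀ t : ℝ, 0 ≤ t → t ≤ |d| → t ∈ T := by
        intro t ht1 ht2
        rcases le_or_gt 0 d with h | h
        · apply hIcc; rw [Set.uIcc_of_le h]
          exact ⟨ht1, by rwa [abs_of_nonneg h] at ht2⟩
        · have hneg : -t ∈ T := by
            apply hIcc; rw [Set.uIcc_of_ge h.le]
            rw [abs_of_neg h] at ht2
            exact ⟨by linarith, by linarith⟩
          simpa using neg_mem hneg
      have hnonneg : ∀ t : ℝ, 0 ≤ t → t ∈ T := by
        intro t ht
        have hdpos : 0 < |d| := abs_pos.mpr hsu0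
        set N : ℕ := ⌈t / |d|⌉₊ + 1 with hN
        have hN0 : 0 < (N:ℝ) := by
          have : (1:ℝ) ≤ (N:ℝ) := by exact_mod_cast Nat.one_le_iff_ne_zero.mpr (by omega)
          linarith
        have h1 : t / N ≤ |d| := by
          rw [div_le_iff₀ hN0]
          have hle : t / |d| ≤ (N:ℝ) := le_trans (Nat.le_ceil _)
            (by exact_mod_cast Nat.le_succ _)
          calc t = (t / |d|) * |d| := by field_simp
            _ ≤ (N:ℝ) * |d| := mul_le_mul_of_nonneg_right hle hdpos.le
            _ = |d| * N := by ring
        have h2 : 0 ≤ t / N := div_nonneg ht hN0.le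
        have hmem := habs _ h2 h1
        have hsm : N • (t / N) = t := by
          rw [nsmul_eq_mul]
          field_simp
        rw [← hsm]
        exact AddSubgroup.nsmul_mem T hmem N
      intro t
      rcases le_or_gt 0 t with h | h
      · exact hnonneg t h
      · have := neg_mem (hnonneg (-t) (by linarith))
        simp only [neg_neg] at this; exact this
    have hstep : ∀ k : ℕ, (∀ t : ℝ, ∃ p : ℝ[X], Eperm 0 (fun x => p.eval x) ∈ G ∧
        p.natDegree ≤ k + 1 ∧ p.coeff (k+1) = t) →
        ∀ t : ℝ, ∃ p : ℝ[X], Eperm 0 (fun x => p.eval x) ∈ G ∧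
        p.natDegree ≤ k ∧ p.coeff k = t := by
      intro k hk t
      obtain ⟨p, hpW, hpd, hpc⟩ := hk 1
      set a : ℝ := t / (k+1) with ha
      refine ⟨p.comp (X + C a) - p, hWsub _ _ (hWshift p hpW a) hpW, ?_, ?_⟩
      · apply natDegree_le_of_coeff_zero
        · exact le_trans (natDegree_sub_le _ _)
            (max_le (natDegree_comp_linear_le hpd a) hpd)
        · rw [coeff_sub, coeff_comp_linear hpd, sub_self]
      · rw [coeff_sub, coeff_comp_linear_pred hpd, hpc, ha]
        have hk1 : (k:ℝ) + 1 ≠ 0 := by positivity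
        field_simp
        ring
    have hSurj : ∀ m : ℕ, m ≤ n → ∀ t : ℝ, ∃ p : ℝ[X],
        Eperm 0 (fun x => p.eval x) ∈ G ∧ p.natDegree ≤ m ∧ p.coeff m = t := by
      have key : ∀ j : ℕ, ∀ m : ℕ, m + j = n → ∀ t : ℝ, ∃ p : ℝ[X],
          Eperm 0 (fun x => p.eval x) ∈ G ∧ p.natDegree ≤ m ∧ p.coeff m = t := by
        intro j
        induction j with
        | zero =>
          intro m hm
          have : m = n := by omega
          subst this
          exact hSurjn
        | succ j ih =>
          intro m hm
          exact hstep m (ih (m+1) (by omega))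
      intro m hm
      exact key (n - m) m (by omega)
    have hFull : ∀ k : ℕ, k ≤ n → ∀ p : ℝ[X], p.natDegree ≤ k →
        Eperm 0 (fun x => p.eval x) ∈ G := by
      intro k
      induction k with
      | zero =>
        intro _ p hp
        rw [Polynomial.eq_C_of_natDegree_le_zero hp]
        exact hWC _
      | succ k ih =>
        intro hk p hp
        obtain ⟨w, hwW, hwd, hwc⟩ := hSurj (k+1) hk (p.coeff (k+1))
        have hsub : (p - w).natDegree ≤ k := by
          apply natDegree_le_of_coeff_zero
          · exact le_trans (natDegree_sub_le _ _) (max_le hp hwd)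
          · rw [coeff_sub, hwc, sub_self]
        have h1 := ih (by omega) (p - w) hsub
        have h2 := hWadd _ _ h1 hwW
        rw [sub_add_cancel] at h2
        exact h2
    set M : Subgroup (Equiv.Perm (ℝ × ℝ)) :=
      { carrier := {f : Equiv.Perm (ℝ × ℝ) | ∃ c : ℝ, ∃ p : ℝ[X],
          p.natDegree ≤ n ∧ ∀ x y : ℝ, f (x, y) = (x + c, y + p.eval x)},
        one_mem' := ⟨0, 0, by simp, by intro x y; simp⟩,
        mul_mem' := by
          rintro f g ⟨c, p, hp, hf⟩ ⟨e, q, hq, hg⟩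
          refine ⟨c + e, q + p.comp (X + C e), ?_, ?_⟩
          · exact le_trans (natDegree_add_le _ _)
              (max_le hq (natDegree_comp_linear_le hp e))
          · intro x y
            rw [Equiv.Perm.mul_apply, hg, hf]
            simp [eval_comp_linear, Prod.ext_iff]
            constructor <;> ring
        inv_mem' := by
          rintro f ⟨c, p, hp, hf⟩
          refine ⟨-c, -(p.comp (X + C (-c))), ?_, ?_⟩
          · rw [natDegree_neg]; exact natDegree_comp_linear_le hp _
          · have hEf : f = Eperm c (fun x => p.eval x) := Eperm_ext hf
            intro x y
            rw [hEf, Eperm_inv, Eperm_apply]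
            simp [eval_comp_linear, Prod.ext_iff]
            constructor <;> ring_nf } with hM
    have hGM : ∀ g ∈ G, g ∈ M := by
      rw [hGdef]
      intro g hg
      refine (Subgroup.closure_le M).2 ?_ hg
      rintro g' ⟨a, ha⟩
      refine ⟨a.1, C a.2 + qp a.1, ?_, ?_⟩
      · exact le_trans (natDegree_add_le _ _)
          (max_le (le_trans (natDegree_C _).le (by omega)) (qp_deg a.1))
      · intro x y
        rw [ha (x, y), hmul, ← qp_eval]
        simp [Prod.ext_iff]
        constructor <;> ring
    ext f
    constructor
    · exact fun hf => hGM f hf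
    · rintro ⟨c, p, hdeg, hf⟩
      set r : ℝ[X] := (p - qp c).comp (X + C (-c)) with hr
      have hrW : Eperm 0 (fun x => r.eval x) ∈ G := by
        apply hFull n le_rfl
        exact natDegree_comp_linear_le
          (le_trans (natDegree_sub_le _ _) (max_le hdeg (qp_deg c))) _
      have hfe : f = Eperm 0 (fun x => r.eval x) * Eperm c (fun x => 0 + (qp c).eval x) := by
        rw [Eperm_mul]
        apply Eperm_ext
        intro x y
        rw [hf]
        simp only [Prod.ext_iff, hr, eval_comp_linear]
        rw [show x + c + -c = x by ring]
        constructor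
        · ring
        · simp [eval_sub]; try ring
      rw [hfe]
      exact mul_mem hrW (gen_mem c 0)
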